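/- Let (X,d) be a complete b-metric space with constant s ≥ 1 and f : X → X a mapping such that for every ε > 0 there exists δ(ε) > 0 with the property: d(z, f(z)) < δ(ε) implies f(B(z,ε)) ⊆ B(z,ε), for every z ∈ X. If for some x ∈ X one has d(fⁿ(x), f^{n+1}(x)) → 0 as n → ∞, then the sequence of iterates (fⁿ(x)) converges to a fixed point of f, i.e. there is z ∈ X with f(z) = z and d(z, fⁿ(x)) → 0. -/
import Mathlib


open Filter

/-- **Fixed point lemma in complete b-metric spaces.** If for every `ε > 0` there is
`δ(ε) > 0` such that `d(z,f(z)) < δ(ε)` implies `f(B(z,ε)) ⊆ B(z,ε)`, and for some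
`x` the distances of consecutive iterates tend to `0`, then the iterates of `x`
converge to a fixed point of `f`. -/
theorem iterates_converge_to_fixed_point {X : Type*}
    (d : X → X → ℝ) (s : ℝ) (hs : 1 ≤ s)
    (hnonneg : ∀ x y, 0 ≤ d x y)
    (heq : ∀ x y, d x y = 0 ↔ x = y)
    (hsymm : ∀ x y, d x y = d y x)
    (htri : ∀ x y z, d x y ≤ s * (d x z + d z y))
    (hcomplete : ∀ u : ℕ → X,
      (∀ ε : ℝ, 0 < ε → ∃ N : ℕ, ∀ m ≥ N, ∀ n ≥ N, d (u m) (u n) < ε) →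
      ∃ x : X, Tendsto (fun n => d x (u n)) atTop (nhds 0))
    (f : X → X)
    (hf : ∀ ε : ℝ, 0 < ε → ∃ δ : ℝ, 0 < δ ∧
      ∀ z : X, d z (f z) < δ → ∀ y : X, d z y < ε → d z (f y) < ε)
    (x : X)
    (hx : Tendsto (fun n => d (f^[n] x) (f^[n + 1] x)) atTop (nhds 0)) :
    ∃ z : X, f z = z ∧ Tendsto (fun n => d z (f^[n] x)) atTop (nhds 0) := by
  set u : ℕ → X := fun n => f^[n] x with hu
  have hs0 : (0:ℝ) < s := lt_of_lt_of_le one_pos hs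
  have hxd : ∀ δ : ℝ, 0 < δ → ∃ N, ∀ n ≥ N, d (u n) (u (n+1)) < δ := by
    intro δ hδ
    obtain ⟨N, hN⟩ := Metric.tendsto_atTop.mp hx δ hδ
    refine ⟨N, fun n hn => ?_⟩
    have := hN n hn
    rwa [Real.dist_eq, sub_zero, abs_of_nonneg (hnonneg _ _)] at this
  have hcauchy : ∀ ε : ℝ, 0 < ε → ∃ N, ∀ m ≥ N, ∀ n ≥ N, d (u m) (u n) < ε := by
    intro ε hε
    have h2s : (0:ℝ) < 2*s+1 := by linarith
    set ε₀ := ε / (2*s+1) with hε₀def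
    have hε₀ : 0 < ε₀ := div_pos hε h2s
    have hmul : ε₀ * (2*s+1) = ε := div_mul_cancel₀ ε (ne_of_gt h2s)
    obtain ⟨δ, hδpos, hδ⟩ := hf ε₀ hε₀
    obtain ⟨N, hN⟩ := hxd (min δ ε₀) (lt_min hδpos hε₀)
    refine ⟨N, ?_⟩
    have key : ∀ k, d (u N) (u (N+k)) < ε₀ := by
      intro k
      induction k with
      | zero => simpa [(heq (u N) (u N)).mpr rfl] using hε₀
      | succ k ih =>
        have h1 : d (u N) (f (u N)) < δ := by
          have h2 := hN N le_rfl
          have hfe : u (N+1) = f (u N) := Function.iterate_succ_apply' f N x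
          rw [hfe] at h2
          exact lt_of_lt_of_le h2 (min_le_left _ _)
        have h3 := hδ (u N) h1 (u (N+k)) ih
        have hfe : u (N+(k+1)) = f (u (N+k)) := by
          show f^[N+(k+1)] x = f (f^[N+k] x)
          rw [← Nat.add_assoc]
          exact Function.iterate_succ_apply' f (N+k) x
        rw [hfe]
        exact h3
    intro m hm n hn
    obtain ⟨k, rfl⟩ := Nat.exists_eq_add_of_le hm
    obtain ⟨l, rfl⟩ := Nat.exists_eq_add_of_le hn
    have hm' : d (u (N+k)) (u N) < ε₀ := by rw [hsymm]; exact key k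
    have hn' : d (u N) (u (N+l)) < ε₀ := key l
    calc d (u (N+k)) (u (N+l)) ≤ s * (d (u (N+k)) (u N) + d (u N) (u (N+l))) := htri _ _ _
      _ < s * (ε₀ + ε₀) := by
          apply mul_lt_mul_of_pos_left _ hs0
          linarith
      _ < ε := by nlinarith
  obtain ⟨z, hz⟩ := hcomplete u hcauchy
  have hzd : ∀ δ : ℝ, 0 < δ → ∃ N, ∀ n ≥ N, d z (u n) < δ := by
    intro δ hδ
    obtain ⟨N, hN⟩ := Metric.tendsto_atTop.mp hz δ hδ
    refine ⟨N, fun n hn => ?_⟩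
    have := hN n hn
    rwa [Real.dist_eq, sub_zero, abs_of_nonneg (hnonneg _ _)] at this
  have hfix : f z = z := by
    by_contra hne
    have hdpos : 0 < d z (f z) := by
      rcases lt_or_eq_of_le (hnonneg z (f z)) with h | h
      · exact h
      · exact absurd ((heq z (f z)).mp h.symm).symm hne
    have h2s : (0:ℝ) < 2*s+1 := by linarith
    set ε₁ := d z (f z) / (2*s+1) with hε₁def
    have hε₁ : 0 < ε₁ := div_pos hdpos h2s
    have hmul : ε₁ * (2*s+1) = d z (f z) := div_mul_cancel₀ _ (ne_of_gt h2s)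
    obtain ⟨δ, hδpos, hδ⟩ := hf ε₁ hε₁
    obtain ⟨N₁, hN₁⟩ := hxd δ hδpos
    obtain ⟨N₂, hN₂⟩ := hzd ε₁ hε₁
    set n := max N₁ N₂ with hn
    have hw1 : d (u n) (f (u n)) < δ := by
      have h2 := hN₁ n (le_max_left _ _)
      have hfe : u (n+1) = f (u n) := Function.iterate_succ_apply' f n x
      rwa [hfe] at h2
    have hw2 : d (u n) z < ε₁ := by rw [hsymm]; exact hN₂ n (le_max_right _ _)
    have h3 : d (u n) (f z) < ε₁ := hδ (u n) hw1 z hw2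
    have h4 : d z (f z) ≤ s * (d z (u n) + d (u n) (f z)) := htri _ _ _
    have h5 : d z (u n) < ε₁ := hN₂ n (le_max_right _ _)
    nlinarith
  exact ⟨z, hfix, hz⟩
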